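/- arXiv:2412.20963 — 2 statements merged into one kernel-verified Lean document; each statement's English description precedes it below -/
import Mathlib

section
/- Let P be the swap operator on ℂ^d ⊗ ℂ^d (d ≥ 1). The extreme points of the convex set of density operators ρ on ℂ^d ⊗ ℂ^d satisfying P ρ P = ρ are exactly the rank-one orthogonal projections onto unit vectors ψ satisfying P ψ = ψ or P ψ = −ψ. -/
open Matrix ComplexOrder

/-- The swap operator `P` on `ℂ^d ⊗ ℂ^d ≅ ℂ^(Fin d × Fin d)`, determined by
`P (e_i ⊗ e_j) = e_j ⊗ e_i`. -/
def swapMat (d : ℕ) : Matrix (Fin d × Fin d) (Fin d × Fin d) ℂ :=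
  fun p q => if p.1 = q.2 ∧ p.2 = q.1 then 1 else 0


set_option linter.unusedSectionVars false
set_option maxHeartbeats 1000000

section Helpers
variable {d : ℕ}

lemma swapMat_apply (p q : Fin d × Fin d) :
    swapMat d p q = if p = q.swap then 1 else 0 := by
  simp [swapMat, Prod.ext_iff, Prod.swap]

lemma swap_mul_apply (σ : Matrix (Fin d × Fin d) (Fin d × Fin d) ℂ) (p q : Fin d × Fin d) :
    (swapMat d * σ) p q = σ p.swap q := by
  rw [mul_apply]
  rw [Finset.sum_eq_single p.swap]
  · rw [swapMat_apply]; simp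
  · intro r _ hr; rw [swapMat_apply]
    rw [if_neg, zero_mul]
    intro h; exact hr (by simp [h])
  · simp
lemma mul_swap_apply (σ : Matrix (Fin d × Fin d) (Fin d × Fin d) ℂ) (p q : Fin d × Fin d) :
    (σ * swapMat d) p q = σ p q.swap := by
  rw [mul_apply]
  rw [Finset.sum_eq_single q.swap]
  · rw [swapMat_apply]; simp
  · intro r _ hr; rw [swapMat_apply]
    rw [if_neg, mul_zero]
    intro h; exact hr (by simp [← h])
  · simp

lemma swap_mulVec (ψ : Fin d × Fin d → ℂ) (p : Fin d × Fin d) :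
    ((swapMat d) *ᵥ ψ) p = ψ p.swap := by
  rw [mulVec, dotProduct, Finset.sum_eq_single p.swap]
  · rw [swapMat_apply]; simp
  · intro r _ hr; rw [swapMat_apply, if_neg, zero_mul]
    intro h; exact hr (by simp [h])
  · simp

lemma swap_mul_swap : swapMat d * swapMat d = 1 := by
  ext p q
  rw [swap_mul_apply, swapMat_apply, one_apply]
  simp [Prod.ext_iff, eq_comm, and_comm]

lemma swap_conjTranspose : (swapMat d)ᴴ = swapMat d := by
  ext p q
  rw [conjTranspose_apply, swapMat_apply, swapMat_apply]
  by_cases h : q = p.swap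
  · subst h; simp
  · rw [if_neg h, if_neg, star_zero]
    intro h2; exact h (by simp [h2])

end Helpers

section Generic
variable {n : Type*} [Fintype n] [DecidableEq n]

lemma outer_mulVec (ψ : n → ℂ) (x : n → ℂ) :
    (vecMulVec ψ (star ψ)) *ᵥ x = (star ψ ⬝ᵥ x) • ψ := by
  funext i
  simp only [mulVec, dotProduct, vecMulVec_apply, Pi.smul_apply, smul_eq_mul,
    Pi.star_apply, Finset.sum_mul]
  exact Finset.sum_congr rfl fun j _ => by ring

lemma star_dot_comm (ψ x : n → ℂ) : star x ⬝ᵥ ψ = star (star ψ ⬝ᵥ x) := by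
  simp only [dotProduct, star_sum, star_mul', star_star, Pi.star_apply]
  exact Finset.sum_congr rfl fun j _ => mul_comm _ _

lemma outer_posSemidef (ψ : n → ℂ) : (vecMulVec ψ (star ψ)).PosSemidef := by
  rw [posSemidef_iff_dotProduct_mulVec]
  constructor
  · ext i j
    simp [vecMulVec_apply, conjTranspose_apply, mul_comm]
  · intro x
    rw [outer_mulVec, dotProduct_smul, smul_eq_mul, star_dot_comm ψ x, mul_comm]
    exact star_mul_self_nonneg _

lemma outer_trace (ψ : n → ℂ) : (vecMulVec ψ (star ψ)).trace = star ψ ⬝ᵥ ψ := by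
  simp only [trace, diag, vecMulVec_apply, dotProduct, Pi.star_apply]
  exact Finset.sum_congr rfl fun j _ => mul_comm _ _

lemma diag_entry_eq (σ : Matrix n n ℂ) (j : n) :
    star (Pi.single j 1 : n → ℂ) ⬝ᵥ σ *ᵥ (Pi.single j 1) = σ j j := by
  rw [mulVec_single]
  simp only [dotProduct, Pi.star_apply]
  rw [Finset.sum_eq_single j]
  · simp
  · intro b _ hb; simp [Pi.single_eq_of_ne hb]
  · simp

lemma psd_trace_zero {σ : Matrix n n ℂ} (hσ : σ.PosSemidef) (h : σ.trace = 0) : σ = 0 := by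
  have hdiag : ∀ j, σ j j = 0 := by
    have hnn : ∀ j ∈ Finset.univ, 0 ≤ σ j j := fun j _ => diag_entry_eq σ j ▸ hσ.dotProduct_mulVec_nonneg (Pi.single j 1)
    intro j
    exact (Finset.sum_eq_zero_iff_of_nonneg hnn).mp h j (Finset.mem_univ j)
  have hcol : ∀ j, σ *ᵥ Pi.single j 1 = 0 := by
    intro j
    rw [← hσ.dotProduct_mulVec_zero_iff, diag_entry_eq]
    exact hdiag j
  ext i j
  have := congrFun (hcol j) i
  rw [mulVec_single] at this
  simpa using this

lemma real_smul_posSemidef {σ : Matrix n n ℂ} (hσ : σ.PosSemidef) {c : ℝ} (hc : 0 ≤ c) :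
    (c • σ).PosSemidef := by
  rw [posSemidef_iff_dotProduct_mulVec]
  constructor
  · ext i j
    simp only [conjTranspose_apply, Matrix.smul_apply, star_smul, star_trivial]
    rw [hσ.1.apply i j]
  · intro x
    rw [smul_mulVec, dotProduct_smul]
    exact smul_nonneg hc (hσ.dotProduct_mulVec_nonneg x)

lemma psd_trace_nonneg {σ : Matrix n n ℂ} (hσ : σ.PosSemidef) : 0 ≤ σ.trace := by
  refine Finset.sum_nonneg fun j _ => ?_
  have := hσ.dotProduct_mulVec_nonneg (Pi.single j 1)
  rw [diag_entry_eq] at this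
  exact this

/-- L1 : a PSD trace-one matrix vanishing on the orthocomplement of a unit vector
is the rank-one projection onto it. -/
lemma eq_outer_of_vanish {σ : Matrix n n ℂ} (hσ : σ.PosSemidef) (hτ : σ.trace = 1)
    {ψ : n → ℂ} (hψ : star ψ ⬝ᵥ ψ = 1)
    (hv : ∀ x : n → ℂ, star ψ ⬝ᵥ x = 0 → star x ⬝ᵥ σ *ᵥ x = 0) :
    σ = vecMulVec ψ (star ψ) := by
  have hker : ∀ x : n → ℂ, star ψ ⬝ᵥ x = 0 → σ *ᵥ x = 0 := fun x hx =>
    (hσ.dotProduct_mulVec_zero_iff x).mp (hv x hx)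
  set c : ℂ := star ψ ⬝ᵥ (σ *ᵥ ψ) with hc
  -- σ ψ = c ψ
  have hσψ : σ *ᵥ ψ = c • ψ := by
    set v : n → ℂ := σ *ᵥ ψ - c • ψ with hvdef
    have hvperp : star ψ ⬝ᵥ v = 0 := by
      simp only [hvdef, dotProduct_sub, dotProduct_smul, smul_eq_mul, hψ, mul_one, ← hc,
        sub_self]
    have hσv : σ *ᵥ v = 0 := hker v hvperp
    have h1 : star v ⬝ᵥ (σ *ᵥ ψ) = 0 := by
      rw [dotProduct_mulVec, ← hσ.1, ← star_mulVec, hσv]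
      simp
    have h2 : star v ⬝ᵥ ψ = 0 := by rw [star_dot_comm, hvperp, star_zero]
    have h3 : star v ⬝ᵥ v = 0 := by
      simp only [hvdef, dotProduct_sub, dotProduct_smul, smul_eq_mul]
      rw [← hvdef, h1, h2, mul_zero, sub_self]
    have hv0 : v = 0 := dotProduct_star_self_eq_zero.mp h3
    have := sub_eq_zero.mp (hvdef ▸ hv0)
    linear_combination (norm := module) this
  -- σ x = c (ψ* x) ψ for all x
  have hact : ∀ x : n → ℂ, σ *ᵥ x = (c * (star ψ ⬝ᵥ x)) • ψ := by
    intro x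
    have hw : star ψ ⬝ᵥ (x - (star ψ ⬝ᵥ x) • ψ) = 0 := by
      simp [dotProduct_sub, dotProduct_smul, hψ]
    have := hker _ hw
    rw [mulVec_sub, mulVec_smul, hσψ, sub_eq_zero] at this
    rw [this, smul_smul, mul_comm]
  -- conclude entrywise
  have hmat : σ = c • vecMulVec ψ (star ψ) := by
    ext i j
    have := congrFun (hact (Pi.single j 1)) i
    rw [mulVec_single] at this
    simp only [dotProduct_single, mul_one, Pi.star_apply, MulOpposite.op_one, one_smul, col_apply] at this
    simp only [Matrix.smul_apply, vecMulVec_apply, Pi.star_apply, smul_eq_mul]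
    rw [this]
    simp only [Pi.smul_apply, smul_eq_mul]
    ring
  have hc1 : c = 1 := by
    have := hτ
    rw [hmat, trace_smul] at this
    have ht : (vecMulVec ψ (star ψ)).trace = 1 := by
      rw [← hψ]
      simp only [trace, diag, vecMulVec_apply, dotProduct, Pi.star_apply]
      exact Finset.sum_congr rfl fun j _ => mul_comm _ _
    rw [ht, smul_eq_mul, mul_one] at this
    exact this
  rw [hmat, hc1, one_smul]

lemma mul_vecMulVec (M : Matrix n n ℂ) (w u : n → ℂ) :
    M * vecMulVec w u = vecMulVec (M *ᵥ w) u := by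
  ext i j
  simp only [mul_apply, vecMulVec_apply, mulVec, dotProduct, Finset.sum_mul]
  exact Finset.sum_congr rfl fun k _ => by ring

lemma vecMulVec_mul (M : Matrix n n ℂ) (w u : n → ℂ) :
    vecMulVec w u * M = vecMulVec w (u ᵥ* M) := by
  ext i j
  simp only [mul_apply, vecMulVec_apply, vecMul, dotProduct, Finset.mul_sum]
  exact Finset.sum_congr rfl fun k _ => by ring

lemma conj_diag_single (B : Matrix n n ℂ) (i : n) :
    B * diagonal (Pi.single i (1:ℂ)) * Bᴴ = vecMulVec (fun p => B p i) (star fun p => B p i) := by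
  ext p q
  rw [mul_apply]
  rw [Finset.sum_eq_single i]
  · rw [mul_diagonal, conjTranspose_apply]
    simp [vecMulVec_apply]
  · intro b _ hb
    rw [mul_diagonal]
    simp [Pi.single_eq_of_ne hb]
  · simp

lemma real_smul_mat (r : ℝ) (M : Matrix n n ℂ) : r • M = (r : ℂ) • M := by
  ext i j; simp [Complex.real_smul]

lemma convexZeroAux {a b : ℂ} {t s : ℝ} (ha : 0 ≤ a) (hb : 0 ≤ b) (ht : 0 < t) (hs : 0 < s)
    (h : (t:ℂ) * a + (s:ℂ) * b = 0) : a = 0 ∧ b = 0 := by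
  have htc : 0 ≤ (t:ℂ) := by exact_mod_cast ht.le
  have hsc : 0 ≤ (s:ℂ) := by exact_mod_cast hs.le
  have hta : 0 ≤ (t:ℂ) * a := mul_nonneg htc ha
  have hsb : 0 ≤ (s:ℂ) * b := mul_nonneg hsc hb
  have h1 : (t:ℂ) * a = 0 := by
    have hle : (t:ℂ)*a ≤ (t:ℂ)*a + (s:ℂ)*b := le_add_of_nonneg_right hsb
    rw [h] at hle
    exact le_antisymm hle hta
  have h2 : (s:ℂ) * b = 0 := by rw [h1, zero_add] at h; exact h
  have htne : (t:ℂ) ≠ 0 := by exact_mod_cast ht.ne'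
  have hsne : (s:ℂ) ≠ 0 := by exact_mod_cast hs.ne'
  exact ⟨(mul_eq_zero.mp h1).resolve_left htne, (mul_eq_zero.mp h2).resolve_left hsne⟩

lemma stepA {P ρ : Matrix n n ℂ} (hP2 : P * P = 1) (hPH : Pᴴ = P)
    (hρ : ρ.PosSemidef) (hτ : ρ.trace = 1) (hsym : P * ρ * P = ρ)
    (hext : ∀ ρ₁, (ρ₁.PosSemidef ∧ ρ₁.trace = 1 ∧ P * ρ₁ * P = ρ₁) →
      ∀ ρ₂, (ρ₂.PosSemidef ∧ ρ₂.trace = 1 ∧ P * ρ₂ * P = ρ₂) →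
      ∀ t : ℝ, 0 < t → t < 1 → ρ = t • ρ₁ + (1 - t) • ρ₂ → ρ₁ = ρ₂) :
    P * ρ = ρ ∨ P * ρ = -ρ := by
  have hcomm : P * ρ = ρ * P := by
    have h := congrArg (P * ·) hsym
    simp only [← mul_assoc, hP2, one_mul] at h
    exact h.symm
  set ρp : Matrix n n ℂ := (1/2 : ℝ) • (ρ + P * ρ) with hρp
  set ρm : Matrix n n ℂ := (1/2 : ℝ) • (ρ - P * ρ) with hρm
  have hsum : ρp + ρm = ρ := by
    rw [hρp, hρm]; module
  have hPP : P * (P * ρ) * P = P * ρ := by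
    rw [← mul_assoc, hP2, one_mul, ← hcomm]
  have expandp : (1 + P) * ρ * (1 + P) = ρ + (ρ + (P * ρ + P * ρ)) := by
    simp only [add_mul, mul_add, one_mul, mul_one]
    rw [hsym, ← hcomm]
    abel
  have expandm : (1 - P) * ρ * (1 - P) = ρ + (ρ - (P * ρ + P * ρ)) := by
    simp only [sub_mul, mul_sub, one_mul, mul_one]
    rw [hsym, ← hcomm]
    abel
  have hpsd_p : ρp.PosSemidef := by
    have hQ : ρp = ((1/2:ℂ) • (1 + P)) * ρ * ((1/2:ℂ) • (1 + P))ᴴ := by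
      rw [conjTranspose_smul, conjTranspose_add, conjTranspose_one, hPH]
      simp only [star_div₀, star_one, RCLike.star_def, map_ofNat]
      rw [smul_mul_assoc, mul_smul_comm, smul_mul_assoc, expandp, hρp, real_smul_mat]
      push_cast
      match_scalars <;> ring
    rw [hQ]
    exact hρ.mul_mul_conjTranspose_same _
  have hpsd_m : ρm.PosSemidef := by
    have hQ : ρm = ((1/2:ℂ) • (1 - P)) * ρ * ((1/2:ℂ) • (1 - P))ᴴ := by
      rw [conjTranspose_smul, conjTranspose_sub, conjTranspose_one, hPH]
      simp only [star_div₀, star_one, RCLike.star_def, map_ofNat]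
      rw [smul_mul_assoc, mul_smul_comm, smul_mul_assoc, expandm, hρm, real_smul_mat]
      push_cast
      match_scalars <;> ring
    rw [hQ]
    exact hρ.mul_mul_conjTranspose_same _
  have hPp : P * ρp = ρp := by
    rw [hρp, mul_smul_comm, mul_add, ← mul_assoc, hP2, one_mul]
    module
  have hPm : P * ρm = -ρm := by
    rw [hρm, mul_smul_comm, mul_sub, ← mul_assoc, hP2, one_mul]
    module
  have hpP : ρp * P = ρp := by
    rw [hρp, smul_mul_assoc, add_mul, hsym, ← hcomm]
    module
  have hmP : ρm * P = -ρm := by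
    rw [hρm, smul_mul_assoc, sub_mul, hsym, ← hcomm]
    module
  have hsymp : P * ρp * P = ρp := by rw [hPp, hpP]
  have hsymm : P * ρm * P = ρm := by rw [hPm, neg_mul, hmP, neg_neg]
  -- traces
  have htr : ρp.trace + ρm.trace = 1 := by rw [← trace_add, hsum, hτ]
  have hap : 0 ≤ ρp.trace := psd_trace_nonneg hpsd_p
  have ham : 0 ≤ ρm.trace := psd_trace_nonneg hpsd_m
  by_cases hbz : ρm.trace = 0
  · left
    have h0 : ρm = 0 := psd_trace_zero hpsd_m hbz
    rw [hρm] at h0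
    have : ρ - P * ρ = 0 := by
      have := congrArg (fun M => (2:ℝ) • M) h0
      simpa [smul_smul] using this
    rw [sub_eq_zero] at this
    exact this.symm
  by_cases haz : ρp.trace = 0
  · right
    have h0 : ρp = 0 := psd_trace_zero hpsd_p haz
    rw [hρp] at h0
    have : ρ + P * ρ = 0 := by
      have := congrArg (fun M => (2:ℝ) • M) h0
      simpa [smul_smul] using this
    rw [add_comm] at this
    exact eq_neg_of_add_eq_zero_left this
  -- middle case: both traces nonzero, derive contradiction with extremality
  exfalso
  set a := ρp.trace with hadef
  set b := ρm.trace with hbdef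
  have haim : a.im = 0 := (Complex.nonneg_iff.mp hap).2.symm
  have hbim : b.im = 0 := (Complex.nonneg_iff.mp ham).2.symm
  obtain ⟨t, hta, htnn⟩ : ∃ t : ℝ, a = (t : ℂ) ∧ 0 ≤ t :=
    ⟨a.re, Complex.ext (by simp) (by simp [haim]), (Complex.nonneg_iff.mp hap).1⟩
  have htpos : 0 < t := by
    rcases lt_or_eq_of_le htnn with h | h
    · exact h
    · exact absurd (by rw [hta, ← h]; simp) haz
  have htb : b = ((1 - t : ℝ) : ℂ) := by
    have hb1 : b = 1 - a := by linear_combination htr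
    rw [hb1, hta]; push_cast; ring
  have ht1 : t < 1 := by
    have hbre : 0 ≤ b.re := (Complex.nonneg_iff.mp ham).1
    have hble : b.re = 1 - t := by rw [htb]; simp
    rcases lt_or_eq_of_le (by linarith : (0:ℝ) ≤ 1 - t) with h | h
    · linarith
    · refine absurd ?_ hbz
      rw [htb, ← h]; simp
  set ρ₁ : Matrix n n ℂ := (t⁻¹ : ℝ) • ρp with hρ₁
  set ρ₂ : Matrix n n ℂ := ((1-t)⁻¹ : ℝ) • ρm with hρ₂
  have h1t : (1:ℝ) - t ≠ 0 := by linarith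
  have hmem₁ : ρ₁.PosSemidef ∧ ρ₁.trace = 1 ∧ P * ρ₁ * P = ρ₁ := by
    refine ⟨real_smul_posSemidef hpsd_p (inv_nonneg.mpr htpos.le), ?_, ?_⟩
    · rw [hρ₁, trace_smul, ← hadef, hta, Complex.real_smul]
      push_cast
      field_simp
    · rw [hρ₁, mul_smul_comm, smul_mul_assoc, hsymp]
  have hmem₂ : ρ₂.PosSemidef ∧ ρ₂.trace = 1 ∧ P * ρ₂ * P = ρ₂ := by
    refine ⟨real_smul_posSemidef hpsd_m (inv_nonneg.mpr (by linarith)), ?_, ?_⟩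
    · rw [hρ₂, trace_smul, ← hbdef, htb, Complex.real_smul]
      push_cast
      field_simp
      have hc : ((1 - t : ℝ) : ℂ) ≠ 0 := Complex.ofReal_ne_zero.mpr h1t
      push_cast at hc
      exact div_self hc
    · rw [hρ₂, mul_smul_comm, smul_mul_assoc, hsymm]
  have e1 : t • ρ₁ = ρp := by rw [hρ₁, smul_smul, mul_inv_cancel₀ htpos.ne', one_smul]
  have e2 : (1 - t) • ρ₂ = ρm := by rw [hρ₂, smul_smul, mul_inv_cancel₀ h1t, one_smul]
  have hconv : ρ = t • ρ₁ + (1 - t) • ρ₂ := by rw [e1, e2, hsum]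
  have heq := hext ρ₁ hmem₁ ρ₂ hmem₂ t htpos ht1 hconv
  have hP₁ : P * ρ₁ = ρ₁ := by rw [hρ₁, mul_smul_comm, hPp]
  have hP₂ : P * ρ₂ = -ρ₂ := by rw [hρ₂, mul_smul_comm, hPm, smul_neg]
  have hneg : ρ₁ = -ρ₂ := by rw [← hP₁, heq, hP₂]
  have htrc : ρ₁.trace = -ρ₂.trace := by rw [hneg, trace_neg]
  rw [hmem₁.2.1, hmem₂.2.1] at htrc
  norm_num at htrc

lemma real_smul_vec (r : ℝ) (w : n → ℂ) : r • w = (r : ℂ) • w := by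
  funext j; simp [Complex.real_smul]

lemma stepB {P ρ : Matrix n n ℂ} (hP2 : P * P = 1) (hPH : Pᴴ = P)
    (hρ : ρ.PosSemidef) (hτ : ρ.trace = 1)
    (hPρ : P * ρ = ρ ∨ P * ρ = -ρ)
    (hext : ∀ ρ₁, (ρ₁.PosSemidef ∧ ρ₁.trace = 1 ∧ P * ρ₁ * P = ρ₁) →
      ∀ ρ₂, (ρ₂.PosSemidef ∧ ρ₂.trace = 1 ∧ P * ρ₂ * P = ρ₂) →
      ∀ t : ℝ, 0 < t → t < 1 → ρ = t • ρ₁ + (1 - t) • ρ₂ → ρ₁ = ρ₂) :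
    ∃ v : n → ℂ, star v ⬝ᵥ v = 1 ∧ (P *ᵥ v = v ∨ P *ᵥ v = -v) ∧ ρ = vecMulVec v (star v) := by
  have h : ρ.IsHermitian := hρ.1
  set U : Matrix n n ℂ := (h.eigenvectorUnitary : Matrix n n ℂ) with hU
  set lam : n → ℝ := h.eigenvalues with hlam
  have hspec : ρ = U * diagonal (Complex.ofReal ∘ lam) * Uᴴ := by
    rw [← star_eq_conjTranspose]
    exact h.spectral_theorem
  have hUU : Uᴴ * U = 1 := by
    rw [← star_eq_conjTranspose]
    exact (Matrix.mem_unitaryGroup_iff').mp h.eigenvectorUnitary.2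
  have hnn : ∀ j, 0 ≤ lam j := hρ.eigenvalues_nonneg
  -- sum of eigenvalues is 1
  have htrlam : ∑ j, lam j = 1 := by
    have h1 : ρ.trace = ∑ j, (lam j : ℂ) := by
      rw [hspec, trace_mul_cycle, hUU, one_mul, trace_diagonal]
      simp
    rw [hτ] at h1
    have := h1.symm
    push_cast at this
    exact_mod_cast this
  -- an index with positive eigenvalue
  obtain ⟨i, hipos⟩ : ∃ i, 0 < lam i := by
    by_contra hcon
    push_neg at hcon
    have : ∀ j, lam j = 0 := fun j => le_antisymm (hcon j) (hnn j)
    simp [this] at htrlam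
  set v : n → ℂ := ⇑(h.eigenvectorBasis i) with hv
  have hUv : (fun p => U p i) = v := by
    funext p
    exact h.eigenvectorUnitary_apply p i
  have hunit : star v ⬝ᵥ v = 1 := by
    have h2 : (inner ℂ (h.eigenvectorBasis i) (h.eigenvectorBasis i) : ℂ) = 1 := by
      rw [@inner_self_eq_norm_sq_to_K]
      rw [h.eigenvectorBasis.orthonormal.1 i]
      norm_num
    rw [← h2, EuclideanSpace.inner_eq_star_dotProduct]
    exact dotProduct_comm _ _
  have heig : ρ *ᵥ v = (lam i : ℂ) • v := by
    have := h.mulVec_eigenvectorBasis i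
    rw [← real_smul_vec]
    exact this
  have hlamne : (lam i : ℂ) ≠ 0 := by exact_mod_cast hipos.ne'
  -- v is an eigenvector of P
  have hPv : P *ᵥ v = v ∨ P *ᵥ v = -v := by
    rcases hPρ with hc | hc
    · left
      have h1 : (lam i : ℂ) • (P *ᵥ v) = (lam i : ℂ) • v := by
        rw [← mulVec_smul, ← heig, mulVec_mulVec, hc, heig]
      exact smul_right_injective _ hlamne h1
    · right
      have h1 : (lam i : ℂ) • (P *ᵥ v) = (lam i : ℂ) • (-v) := by
        rw [← mulVec_smul, ← heig, mulVec_mulVec, hc, neg_mulVec, heig, smul_neg]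
      exact smul_right_injective _ hlamne h1
  set ρ₁ : Matrix n n ℂ := vecMulVec v (star v) with hρ₁
  -- decomposition ρ = lam i • ρ₁ + σ
  set g : n → ℂ := fun j => if j = i then 0 else (lam j : ℂ) with hg
  have hD : diagonal (Complex.ofReal ∘ lam) =
      (lam i : ℂ) • diagonal (Pi.single i 1 : n → ℂ) + diagonal g := by
    have hfun : Complex.ofReal ∘ lam = (lam i : ℂ) • (Pi.single i 1 : n → ℂ) + g := by
      funext j
      by_cases hj : j = i
      · subst hj; simp [hg]
      · simp [hg, hj, Pi.single_eq_of_ne hj]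
    rw [hfun]
    ext j k
    by_cases hjk : j = k
    · subst hjk
      simp [diagonal_apply_eq]
    · simp [diagonal_apply_ne _ hjk]
  set σ : Matrix n n ℂ := U * diagonal g * Uᴴ with hσ
  have houter : U * diagonal (Pi.single i (1:ℂ)) * Uᴴ = ρ₁ := by
    rw [conj_diag_single U i, hρ₁, hUv]
  have hdecomp : ρ = (lam i : ℂ) • ρ₁ + σ := by
    rw [hspec, hD, mul_add, add_mul, mul_smul_comm, smul_mul_assoc, houter, hσ]
  have hσpsd : σ.PosSemidef := by
    rw [hσ, ← star_eq_conjTranspose, star_eq_conjTranspose]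
    refine PosSemidef.mul_mul_conjTranspose_same ?_ U
    rw [posSemidef_diagonal_iff]
    intro j
    rw [hg]
    by_cases hj : j = i
    · simp [hj]
    · simp only [hj, if_false]
      exact_mod_cast hnn j
  have hσtr : σ.trace = ((1 - lam i : ℝ) : ℂ) := by
    rw [hσ, trace_mul_cycle, hUU, one_mul, trace_diagonal]
    have : ∑ j, g j = ∑ j, (lam j : ℂ) - (lam i : ℂ) := by
      have h1 : ∑ j ∈ Finset.univ.erase i, g j + g i = ∑ j, g j :=
        Finset.sum_erase_add _ _ (Finset.mem_univ i)
      have h2 : ∑ j ∈ Finset.univ.erase i, ((lam j : ℂ)) + (lam i : ℂ) = ∑ j, (lam j : ℂ) :=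
        Finset.sum_erase_add _ _ (Finset.mem_univ i)
      have h3 : ∑ j ∈ Finset.univ.erase i, g j = ∑ j ∈ Finset.univ.erase i, ((lam j : ℂ)) :=
        Finset.sum_congr rfl (fun j hj => by simp [hg, (Finset.mem_erase.mp hj).1])
      have h4 : g i = (0 : ℂ) := by simp [hg]
      linear_combination (-1 : ℂ) * h1 + h2 + h3 + h4
    rw [this]
    push_cast [← htrlam]
    ring
  have hρ₁psd : ρ₁.PosSemidef := outer_posSemidef v
  have hρ₁tr : ρ₁.trace = 1 := by rw [hρ₁, outer_trace, hunit]
  have hρ₁sym : P * ρ₁ * P = ρ₁ := by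
    rw [hρ₁, _root_.mul_vecMulVec, _root_.vecMulVec_mul]
    have hstar : star v ᵥ* P = star (P *ᵥ v) := by rw [star_mulVec, hPH]
    rcases hPv with hc | hc
    · rw [hstar, hc]
    · rw [hstar, hc]
      ext p q
      simp [vecMulVec_apply]
  have hρP : P * ρ * P = ρ := by
    rcases hPρ with hc | hc
    · have hρP2 : ρ * P = ρ := by
        have := congrArg conjTranspose hc
        rwa [conjTranspose_mul, hPH, h.eq] at this
      rw [hc, hρP2]
    · have hρP2 : ρ * P = -ρ := by
        have := congrArg conjTranspose hc
        rwa [conjTranspose_mul, hPH, h.eq, conjTranspose_neg, h.eq] at this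
      rw [hc, neg_mul, hρP2, neg_neg]
  have hσsym : P * σ * P = σ := by
    have hσeq : σ = ρ - (lam i : ℂ) • ρ₁ := by rw [hdecomp]; abel
    rw [hσeq, mul_sub, sub_mul, mul_smul_comm, smul_mul_assoc, hρP, hρ₁sym]
  -- case analysis on lam i
  rcases eq_or_lt_of_le (show lam i ≤ 1 by
    by_contra hcon
    push_neg at hcon
    have h0 : (0:ℝ) ≤ 1 - lam i := by
      have := psd_trace_nonneg hσpsd
      rw [hσtr] at this
      exact_mod_cast (Complex.nonneg_iff.mp this).1
    linarith) with hlam1 | hlam1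
  · -- lam i = 1 : σ = 0, ρ = ρ₁
    have hσ0 : σ = 0 := psd_trace_zero hσpsd (by rw [hσtr, ← hlam1]; simp)
    refine ⟨v, hunit, hPv, ?_⟩
    rw [hdecomp, hσ0, add_zero, hlam1]
    simp [hρ₁]
  · -- lam i < 1 : use extremality
    have h1t : (1:ℝ) - lam i ≠ 0 := by linarith
    set ρ₂ : Matrix n n ℂ := ((1 - lam i)⁻¹ : ℝ) • σ with hρ₂
    have hmem₂ : ρ₂.PosSemidef ∧ ρ₂.trace = 1 ∧ P * ρ₂ * P = ρ₂ := by
      refine ⟨real_smul_posSemidef hσpsd (inv_nonneg.mpr (by linarith)), ?_, ?_⟩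
      · rw [hρ₂, trace_smul, hσtr, Complex.real_smul]
        push_cast
        field_simp
        have hc : ((1 - lam i : ℝ) : ℂ) ≠ 0 := Complex.ofReal_ne_zero.mpr h1t
        push_cast at hc
        exact div_self hc
      · rw [hρ₂, mul_smul_comm, smul_mul_assoc, hσsym]
    have e2 : (1 - lam i) • ρ₂ = σ := by
      rw [hρ₂, smul_smul, mul_inv_cancel₀ h1t, one_smul]
    have hconv : ρ = lam i • ρ₁ + (1 - lam i) • ρ₂ := by
      rw [e2, real_smul_mat, hdecomp]
    have heq := hext ρ₁ ⟨hρ₁psd, hρ₁tr, hρ₁sym⟩ ρ₂ hmem₂ (lam i) hipos hlam1 hconv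
    refine ⟨v, hunit, hPv, ?_⟩
    rw [hdecomp, ← e2, ← heq, ← real_smul_mat, ← add_smul]
    have hone : lam i + (1 - lam i) = 1 := by ring
    rw [hone, one_smul]

end Generic

/-- the extreme points of the convex set of density operators `ρ` on
`ℂ^d ⊗ ℂ^d` satisfying `P ρ P = ρ` are exactly the rank-one orthogonal projections
`|ψ⟩⟨ψ|` onto unit vectors `ψ` with `P ψ = ψ` or `P ψ = -ψ`. -/
theorem stmt0 (d : ℕ) (hd : 1 ≤ d)
    (C : Set (Matrix (Fin d × Fin d) (Fin d × Fin d) ℂ))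
    (hC : C = {σ : Matrix (Fin d × Fin d) (Fin d × Fin d) ℂ |
        σ.PosSemidef ∧ σ.trace = 1 ∧ swapMat d * σ * swapMat d = σ})
    (ρ : Matrix (Fin d × Fin d) (Fin d × Fin d) ℂ) :
    (ρ ∈ C ∧ ∀ ρ₁ ∈ C, ∀ ρ₂ ∈ C, ∀ t : ℝ, 0 < t → t < 1 →
        ρ = t • ρ₁ + (1 - t) • ρ₂ → ρ₁ = ρ₂) ↔
      (∃ ψ : Fin d × Fin d → ℂ, star ψ ⬝ᵥ ψ = 1 ∧
        ((swapMat d).mulVec ψ = ψ ∨ (swapMat d).mulVec ψ = -ψ) ∧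
        ρ = Matrix.vecMulVec ψ (star ψ)) := by
  subst hC
  constructor
  · rintro ⟨hmem, hext⟩
    simp only [Set.mem_setOf_eq] at hmem
    obtain ⟨hpsd, htr, hsym⟩ := hmem
    have hext' : ∀ ρ₁, (ρ₁.PosSemidef ∧ ρ₁.trace = 1 ∧ swapMat d * ρ₁ * swapMat d = ρ₁) →
        ∀ ρ₂, (ρ₂.PosSemidef ∧ ρ₂.trace = 1 ∧ swapMat d * ρ₂ * swapMat d = ρ₂) →
        ∀ t : ℝ, 0 < t → t < 1 → ρ = t • ρ₁ + (1 - t) • ρ₂ → ρ₁ = ρ₂ := by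
      intro ρ₁ h₁ ρ₂ h₂ t ht ht1 hcv
      exact hext ρ₁ h₁ ρ₂ h₂ t ht ht1 hcv
    have hPρ := stepA swap_mul_swap swap_conjTranspose hpsd htr hsym hext'
    obtain ⟨v, hunit, hPv, hout⟩ :=
      stepB swap_mul_swap swap_conjTranspose hpsd htr hPρ hext'
    exact ⟨v, hunit, hPv, hout⟩
  · rintro ⟨ψ, hψ, hPψ, rfl⟩
    have hstar : star ψ ᵥ* swapMat d = star (swapMat d *ᵥ ψ) := by
      rw [star_mulVec, swap_conjTranspose]
    have hsymρ : swapMat d * vecMulVec ψ (star ψ) * swapMat d = vecMulVec ψ (star ψ) := by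
      rw [_root_.mul_vecMulVec, _root_.vecMulVec_mul, hstar]
      rcases hPψ with hc | hc
      · rw [hc]
      · rw [hc]
        ext p q
        simp [vecMulVec_apply]
    refine ⟨⟨outer_posSemidef ψ, by rw [outer_trace, hψ], hsymρ⟩, ?_⟩
    intro ρ₁ h₁ ρ₂ h₂ t ht ht1 hconv
    simp only [Set.mem_setOf_eq] at h₁ h₂
    have key : ∀ x : Fin d × Fin d → ℂ, star ψ ⬝ᵥ x = 0 →
        star x ⬝ᵥ ρ₁ *ᵥ x = 0 ∧ star x ⬝ᵥ ρ₂ *ᵥ x = 0 := by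
      intro x hx
      have hρx : (vecMulVec ψ (star ψ)) *ᵥ x = 0 := by
        rw [outer_mulVec, hx, zero_smul]
      have hsum0 : (t:ℂ) * (star x ⬝ᵥ ρ₁ *ᵥ x) + ((1-t:ℝ):ℂ) * (star x ⬝ᵥ ρ₂ *ᵥ x) = 0 := by
        have := congrArg (fun M => star x ⬝ᵥ M *ᵥ x) hconv
        simp only [add_mulVec, smul_mulVec, dotProduct_add, dotProduct_smul,
          Complex.real_smul] at this
        rw [hρx] at this
        simp only [dotProduct_zero] at this
        rw [← this]
      exact convexZeroAux (h₁.1.dotProduct_mulVec_nonneg x) (h₂.1.dotProduct_mulVec_nonneg x) ht (by linarith) hsum0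
    have e₁ : ρ₁ = vecMulVec ψ (star ψ) :=
      eq_outer_of_vanish h₁.1 h₁.2.1 hψ (fun x hx => (key x hx).1)
    have e₂ : ρ₂ = vecMulVec ψ (star ψ) :=
      eq_outer_of_vanish h₂.1 h₂.2.1 hψ (fun x hx => (key x hx).2)
    rw [e₁, e₂]
end

section
/- Let P be the swap operator on ℂ^d ⊗ ℂ^d. For any two unit vectors ψ, φ in ℂ^d ⊗ ℂ^d with P ψ = −ψ and P φ = −φ, there exists a unitary U on ℂ^d ⊗ ℂ^d commuting with P such that U ψ = φ. (The group of swap-commuting unitaries acts transitively on wavefunction-antisymmetric unit vectors.) -/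
open Matrix

set_option linter.unusedSectionVars false

namespace Stmt10Aux
variable {n : Type*} [Fintype n]

lemma vmv_mulVec (a b x : n → ℂ) :
    (vecMulVec a b).mulVec x = (b ⬝ᵥ x) • a := by
  ext i
  simp [vecMulVec_apply, mulVec, dotProduct, Finset.mul_sum, mul_comm, mul_left_comm]

lemma vmv_mul_vmv (a b c e : n → ℂ) :
    vecMulVec a b * vecMulVec c e = (b ⬝ᵥ c) • vecMulVec a e := by
  ext i j
  simp [vecMulVec_apply, mul_apply, dotProduct, Finset.sum_mul, Finset.mul_sum]
  apply Finset.sum_congr rfl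
  intro k _
  ring

lemma vmv_star (a b : n → ℂ) :
    star (vecMulVec a b) = vecMulVec (star b) (star a) := by
  ext i j
  simp [vecMulVec_apply, conjTranspose_apply, mul_comm]

lemma mul_vmv (M : Matrix n n ℂ) (a b : n → ℂ) :
    M * vecMulVec a b = vecMulVec (M.mulVec a) b := by
  ext i j
  simp [vecMulVec_apply, mul_apply, mulVec, dotProduct, Finset.sum_mul, mul_assoc]

lemma vmv_mul (M : Matrix n n ℂ) (a b : n → ℂ) :
    vecMulVec a b * M = vecMulVec a (Mᵀ.mulVec b) := by
  ext i j
  simp [vecMulVec_apply, mul_apply, mulVec, dotProduct, Finset.mul_sum]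
  apply Finset.sum_congr rfl
  intro k _
  ring

lemma dot_self_eq_zero {x : n → ℂ} (h : star x ⬝ᵥ x = 0) : x = 0 := by
  have h3 : ∑ j, (Complex.normSq (x j) : ℂ) = 0 := by
    rw [← h]
    simp [dotProduct, Complex.star_def, Complex.normSq_eq_conj_mul_self]
  have h2 : ∑ j, Complex.normSq (x j) = 0 := by exact_mod_cast h3
  ext i
  exact Complex.normSq_eq_zero.mp
    ((Finset.sum_eq_zero_iff_of_nonneg (fun j _ => Complex.normSq_nonneg _)).mp h2 i
      (Finset.mem_univ i))

lemma vmv_neg_left (a b : n → ℂ) : vecMulVec (-a) b = -vecMulVec a b := by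
  ext i j; simp [vecMulVec_apply]

lemma vmv_neg_right (a b : n → ℂ) : vecMulVec a (-b) = -vecMulVec a b := by
  ext i j; simp [vecMulVec_apply]

end Stmt10Aux

open Stmt10Aux

lemma swapMat_transpose (d : ℕ) : (swapMat d)ᵀ = swapMat d := by
  ext p q
  simp only [transpose_apply, swapMat]
  exact if_congr ⟨fun ⟨h1, h2⟩ => ⟨h2.symm, h1.symm⟩,
    fun ⟨h1, h2⟩ => ⟨h2.symm, h1.symm⟩⟩ rfl rfl

lemma swapMat_mulVec_star (d : ℕ) (x : Fin d × Fin d → ℂ)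
    (hx : (swapMat d).mulVec x = -x) :
    (swapMat d).mulVec (star x) = -(star x) := by
  have hreal : ∀ p q, (starRingEnd ℂ) (swapMat d p q) = swapMat d p q := by
    intro p q; simp only [swapMat]; split <;> simp
  have h : (swapMat d).mulVec (star x) = star ((swapMat d).mulVec x) := by
    ext i
    simp only [mulVec, dotProduct, Pi.star_apply, Complex.star_def, map_sum, _root_.map_mul,
      hreal]
  rw [h, hx, star_neg]

/-- the swap-commuting unitaries act transitively on the
wavefunction-antisymmetric unit vectors. -/
theorem stmt10 (d : ℕ) (ψ φ : Fin d × Fin d → ℂ)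
    (hψ : star ψ ⬝ᵥ ψ = 1) (hφ : star φ ⬝ᵥ φ = 1)
    (hψa : (swapMat d).mulVec ψ = -ψ) (hφa : (swapMat d).mulVec φ = -φ) :
    ∃ U ∈ Matrix.unitaryGroup (Fin d × Fin d) ℂ,
      U * swapMat d = swapMat d * U ∧ U.mulVec ψ = φ := by
  set c : ℂ := star ψ ⬝ᵥ φ with hc
  obtain ⟨θ, hθ1, hθ2⟩ : ∃ θ : ℂ, θ * (starRingEnd ℂ) θ = 1 ∧
      (starRingEnd ℂ) θ * c = θ * (starRingEnd ℂ) c := by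
    by_cases hc0 : c = 0
    · exact ⟨1, by simp, by simp [hc0]⟩
    · refine ⟨c / (‖c‖ : ℂ), ?_, ?_⟩
      · have habs : ((‖c‖ : ℝ) : ℂ) ≠ 0 := by
          exact_mod_cast norm_ne_zero_iff.mpr hc0
        rw [map_div₀, Complex.conj_ofReal, div_mul_div_comm, Complex.mul_conj]
        rw [div_eq_one_iff_eq (by simpa using mul_ne_zero habs habs)]
        norm_cast
        rw [Complex.normSq_eq_norm_sq, sq]
      · rw [map_div₀, Complex.conj_ofReal]
        ring
  -- the phase gate V
  set V : Matrix (Fin d × Fin d) (Fin d × Fin d) ℂ :=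
    1 + (θ - 1) • vecMulVec ψ (star ψ) with hV
  have hVstar : star V = 1 + ((starRingEnd ℂ) θ - 1) • vecMulVec ψ (star ψ) := by
    rw [hV]
    simp [star_add, star_smul, vmv_star, Complex.star_def, map_sub]
  have hVunit : V * star V = 1 := by
    rw [hV, hVstar]
    simp only [add_mul, mul_add, one_mul, mul_one, smul_mul_assoc, mul_smul_comm,
      smul_add, vmv_mul_vmv, hψ, smul_smul, one_smul]
    match_scalars
    all_goals first | ring1 | linear_combination hθ1
  have hVcomm : V * swapMat d = swapMat d * V := by
    rw [hV]
    simp only [add_mul, mul_add, one_mul, mul_one, smul_mul_assoc, mul_smul_comm,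
      vmv_mul, mul_vmv, swapMat_transpose, hψa, swapMat_mulVec_star d ψ hψa,
      vmv_neg_left, vmv_neg_right]
  have hVψ : V.mulVec ψ = θ • ψ := by
    rw [hV]
    simp only [add_mulVec, one_mulVec, smul_mulVec, vmv_mulVec, hψ, one_smul,
      smul_smul]
    ext i; simp; ring
  set ψ' : Fin d × Fin d → ℂ := θ • ψ with hψ'
  set x : Fin d × Fin d → ℂ := ψ' - φ with hx
  have hψ'ψ' : star ψ' ⬝ᵥ ψ' = 1 := by
    rw [hψ']
    simp only [star_smul, smul_dotProduct, dotProduct_smul, hψ, Complex.star_def,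
      smul_eq_mul, mul_one]
    linear_combination hθ1
  have hψ'φ : star ψ' ⬝ᵥ φ = (starRingEnd ℂ) θ * c := by
    rw [hψ']
    simp [Complex.star_def, smul_dotProduct, smul_eq_mul, ← hc]
  have hφψ' : star φ ⬝ᵥ ψ' = θ * (starRingEnd ℂ) c := by
    rw [hψ']
    have h : star φ ⬝ᵥ ψ = (starRingEnd ℂ) c := by
      rw [hc]
      simp [dotProduct, Complex.star_def, map_sum, _root_.map_mul, mul_comm]
    simp [dotProduct_smul, h, smul_eq_mul, mul_comm]
  obtain ⟨k, hk⟩ : ∃ k : ℂ, k = star x ⬝ᵥ x := ⟨_, rfl⟩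
  have hkval : k = 2 - 2 * ((starRingEnd ℂ) θ * c) := by
    rw [hk, hx]
    simp only [star_sub, sub_dotProduct, dotProduct_sub, hψ'ψ', hφ, hψ'φ, hφψ']
    rw [← hθ2]
    ring
  have hxψ' : star x ⬝ᵥ ψ' = 1 - θ * (starRingEnd ℂ) c := by
    rw [hx]
    simp only [star_sub, sub_dotProduct, hψ'ψ', hφψ']
  have h2xk : 2 * (star x ⬝ᵥ ψ') = k := by
    rw [hxψ', hkval, ← hθ2]; ring
  have hxantisym : (swapMat d).mulVec x = -x := by
    rw [hx, hψ', mulVec_sub, mulVec_smul, hψa, hφa]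
    module
  by_cases hk0 : k = 0
  · -- x = 0, so φ = θ • ψ, take U = V
    have hx0 : x = 0 := dot_self_eq_zero (by rw [← hk]; exact hk0)
    have hx0' : ψ' - φ = 0 := by rw [← hx]; exact hx0
    refine ⟨V, Matrix.mem_unitaryGroup_iff.mpr hVunit, hVcomm, ?_⟩
    rw [hVψ]
    exact sub_eq_zero.mp hx0'
  · -- reflection R through x
    set R : Matrix (Fin d × Fin d) (Fin d × Fin d) ℂ :=
      1 - (2 / k) • vecMulVec x (star x) with hR
    have hkreal : (starRingEnd ℂ) k = k := by
      rw [hk]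
      simp [dotProduct, Complex.star_def, map_sum, _root_.map_mul, mul_comm]
    have hRstar : star R = R := by
      rw [hR]
      simp [star_sub, star_smul, vmv_star, Complex.star_def, map_div₀, hkreal]
    have hRunit : R * star R = 1 := by
      rw [hRstar, hR]
      simp only [sub_mul, mul_sub, one_mul, mul_one, smul_mul_assoc, mul_smul_comm,
        smul_sub, vmv_mul_vmv, ← hk, smul_smul]
      match_scalars
      all_goals (field_simp; try ring)
    have hRcomm : R * swapMat d = swapMat d * R := by
      rw [hR]
      simp only [sub_mul, mul_sub, one_mul, mul_one, smul_mul_assoc, mul_smul_comm,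
        vmv_mul, mul_vmv, swapMat_transpose, hxantisym, swapMat_mulVec_star d x hxantisym,
        vmv_neg_left, vmv_neg_right]
    have hRψ' : R.mulVec ψ' = φ := by
      rw [hR]
      simp only [sub_mulVec, one_mulVec, smul_mulVec, vmv_mulVec, smul_smul]
      have h1 : 2 / k * (star x ⬝ᵥ ψ') = 1 := by
        rw [div_mul_eq_mul_div, h2xk, div_self hk0]
      rw [h1, one_smul, hx]
      ext i; simp
    refine ⟨R * V, ?_, ?_, ?_⟩
    · exact Matrix.mem_unitaryGroup_iff.mpr (by
        rw [StarMul.star_mul, mul_assoc, ← mul_assoc V, hVunit, one_mul, hRunit])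
    · rw [mul_assoc, hVcomm, ← mul_assoc, hRcomm, mul_assoc]
    · rw [← mulVec_mulVec, hVψ, hRψ']
end
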